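/- Let c, A > 0 and γ ∈ (1,2), let ρ* > 0, let P(ρ) := cρ^γ, and let k(ρ) := (2A/(γ−1))(ρ^{(γ−1)/2} − (ρ*)^{(γ−1)/2}) for ρ > 0. Then for every constant K > 0 satisfying K·c·(γ−1)·(ρ*)^{(γ+1)/2} > 2A, the inequality |k(ρ)| ≤ K|P(ρ) − P(ρ*)| holds for all ρ > 0. -/

import Mathlib

open Real Set

/-- **Validity of Assumption (A) for the ideal gas.**  With `P(ρ) = cρ^γ` and
`k(ρ) = (2A/(γ−1))(ρ^{(γ−1)/2} − (ρ*)^{(γ−1)/2})` (`c, A > 0`, `γ ∈ (1,2)`,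
`ρ* > 0`), every `K > 0` with `K c (γ−1) (ρ*)^{(γ+1)/2} > 2A` satisfies
`|k(ρ)| ≤ K|P(ρ) − P(ρ*)|` for all `ρ > 0`. -/
theorem ideal_gas_satisfies_AssumpA
    (c A γ ρs : ℝ) (hc : 0 < c) (hA : 0 < A) (hγ : 1 < γ ∧ γ < 2) (hρs : 0 < ρs)
    (P k : ℝ → ℝ)
    (hP : ∀ x : ℝ, P x = c * x ^ γ)
    (hk : ∀ x : ℝ, k x = 2 * A / (γ - 1) * (x ^ ((γ - 1) / 2) - ρs ^ ((γ - 1) / 2)))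
    (K : ℝ) (hK : 0 < K) (hKbig : 2 * A < K * c * (γ - 1) * ρs ^ ((γ + 1) / 2)) :
    ∀ x, 0 < x → |k x| ≤ K * |P x - P ρs| := by
  obtain ⟨hγ1, hγ2⟩ := hγ
  intro x hx
  set α : ℝ := (γ - 1) / 2 with hαdef
  have hα0 : 0 < α := by simp only [hαdef]; linarith
  have hαγ : α ≤ γ := by simp only [hαdef]; linarith
  set t : ℝ := x / ρs with htdef
  have ht0 : 0 < t := div_pos hx hρs
  have hxρ : x = ρs * t := by rw [htdef]; field_simp [hρs.ne']
  have hxα : x ^ α = ρs ^ α * t ^ α := by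
    rw [hxρ, mul_rpow hρs.le ht0.le]
  have hxγ : x ^ γ = ρs ^ γ * t ^ γ := by
    rw [hxρ, mul_rpow hρs.le ht0.le]
  have key : |t ^ α - 1| ≤ |t ^ γ - 1| := by
    rcases le_or_gt 1 t with h1 | h1
    · have h2 : t ^ α ≤ t ^ γ := rpow_le_rpow_of_exponent_le h1 hαγ
      have h3 : (1:ℝ) ≤ t ^ α := Real.one_le_rpow h1 hα0.le
      rw [abs_of_nonneg (by linarith), abs_of_nonneg (by linarith)]
      linarith
    · have h2 : t ^ γ ≤ t ^ α := rpow_le_rpow_of_exponent_ge ht0 h1.le hαγ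
      have h3 : t ^ α ≤ 1 := Real.rpow_le_one ht0.le h1.le hα0.le
      rw [abs_of_nonpos (by linarith), abs_of_nonpos (by linarith)]
      linarith
  have hcoef : 2 * A / (γ - 1) * ρs ^ α ≤ K * (c * ρs ^ γ) := by
    have hsplit : ρs ^ γ = ρs ^ ((γ + 1) / 2) * ρs ^ α := by
      rw [← rpow_add hρs, hαdef]; ring_nf
    have hρα : 0 < ρs ^ α := rpow_pos_of_pos hρs _
    rw [hsplit, div_mul_eq_mul_div, div_le_iff₀ (by linarith)]
    nlinarith [rpow_pos_of_pos hρs ((γ + 1) / 2)]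
  have hcoef0 : 0 ≤ 2 * A / (γ - 1) * ρs ^ α :=
    mul_nonneg (div_nonneg (by linarith) (by linarith)) (rpow_pos_of_pos hρs _).le
  rw [hk, hP, hP]
  calc |2 * A / (γ - 1) * (x ^ α - ρs ^ α)|
      = (2 * A / (γ - 1) * ρs ^ α) * |t ^ α - 1| := by
        have e1 : x ^ α - ρs ^ α = ρs ^ α * (t ^ α - 1) := by rw [hxα]; ring
        rw [e1, ← mul_assoc, abs_mul, abs_of_nonneg hcoef0]
    _ ≤ (K * (c * ρs ^ γ)) * |t ^ γ - 1| :=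
        mul_le_mul hcoef key (abs_nonneg _) (by positivity)
    _ = K * |c * x ^ γ - c * ρs ^ γ| := by
        have e2 : c * x ^ γ - c * ρs ^ γ = c * ρs ^ γ * (t ^ γ - 1) := by
          rw [hxγ]; ring
        rw [e2, abs_mul, abs_of_nonneg (by positivity : (0:ℝ) ≤ c * ρs ^ γ), mul_assoc]
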